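/- The polynomial x^5 + 15x^4 - 10x^3 + 295x^2 + 5x + 18, with coefficients mapped into the field ℚ_5 of 5-adic numbers, is irreducible over ℚ_5. -/

import Mathlib

open Polynomial

instance : Fact (Nat.Prime 5) := ⟨by norm_num⟩

/-- The (shifted, inverted-uniformizer) auxiliary Eisenstein polynomial over `ℤ_[5]`:
it is the minimal polynomial of `η = (α - 2)^3 / 5` where `α` is a root of the quintic. -/
noncomputable def hZaux : ℤ_[5][X] :=
  X ^ 5 + 1280 * X ^ 4 - 25650 * X ^ 3 + 230400 * X ^ 2 + 905825 * X + 878080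

theorem hZaux_monic : hZaux.Monic := by unfold hZaux; monicity!

theorem hZaux_natDegree : hZaux.natDegree = 5 := by unfold hZaux; compute_degree!

theorem not25_dvd : ¬ ((5 : ℤ_[5]) ^ 2 ∣ 878080) := by
  intro ⟨c, hc⟩
  have h1 : (878080 : ℤ_[5]) = 5 * 175616 := by norm_num
  have h5 : (5 : ℤ_[5]) ≠ 0 := by
    exact_mod_cast (PadicInt.prime_p (p := 5)).ne_zero
  have h2 : (175616 : ℤ_[5]) = 5 * c :=
    mul_left_cancel₀ h5 (by rw [← h1, hc]; ring)
  have h3 : ‖(175616 : ℤ_[5])‖ < 1 := by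
    rw [PadicInt.norm_lt_one_iff_dvd]
    exact ⟨c, h2⟩
  have h4 : ((175616 : ℤ) : ℤ_[5]) = (175616 : ℤ_[5]) := by push_cast; ring
  rw [← h4, PadicInt.norm_int_lt_one_iff_dvd] at h3
  norm_num at h3

theorem hZaux_eisenstein : hZaux.IsEisensteinAt (Ideal.span {(5 : ℤ_[5])}) := by
  constructor
  · rw [hZaux_monic.leadingCoeff, Ideal.mem_span_singleton]
    intro h
    exact (PadicInt.prime_p (p := 5)).not_unit (isUnit_of_dvd_one h)
  · intro n hn
    rw [hZaux_natDegree] at hn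
    rw [Ideal.mem_span_singleton]
    unfold hZaux
    interval_cases n <;> simp [coeff_add, coeff_sub, coeff_X] <;>
      [exact ⟨175616, by norm_num⟩; exact ⟨181165, by norm_num⟩;
       exact ⟨46080, by norm_num⟩; exact ⟨5130, by norm_num⟩; exact ⟨256, by norm_num⟩]
  · rw [Ideal.span_singleton_pow, Ideal.mem_span_singleton]
    have : hZaux.coeff 0 = 878080 := by unfold hZaux; simp [coeff_add, coeff_sub]
    rw [this]
    exact not25_dvd

theorem hZaux_irred : Irreducible hZaux :=
  hZaux_eisenstein.irreducible
    ((Ideal.span_singleton_prime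
        (by exact_mod_cast (PadicInt.prime_p (p := 5)).ne_zero)).mpr PadicInt.prime_p)
    hZaux_monic.isPrimitive (by rw [hZaux_natDegree]; norm_num)

/-- The auxiliary polynomial viewed over `ℚ_[5]`. -/
noncomputable def hQaux : ℚ_[5][X] :=
  X ^ 5 + 1280 * X ^ 4 - 25650 * X ^ 3 + 230400 * X ^ 2 + 905825 * X + 878080

theorem hQaux_eq : hQaux = hZaux.map (algebraMap ℤ_[5] ℚ_[5]) := by
  unfold hQaux hZaux
  simp [Polynomial.map_add, Polynomial.map_sub, Polynomial.map_mul, Polynomial.map_pow,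
    Polynomial.map_ofNat]

theorem hQaux_irred : Irreducible hQaux := by
  rw [hQaux_eq]
  exact (hZaux_monic.irreducible_iff_irreducible_map_fraction_map).mp hZaux_irred

theorem hQaux_monic : hQaux.Monic := by unfold hQaux; monicity!

theorem hQaux_natDegree : hQaux.natDegree = 5 := by unfold hQaux; compute_degree!

/-- If `α` is a root of the quintic in any field extension of `ℚ_[5]`, then
`(α - 2)^3 / 5` is a root of the auxiliary polynomial. -/
theorem key_root {K : Type} [Field K] [Algebra ℚ_[5] K] (α : K)
    (hα : α ^ 5 + 15 * α ^ 4 - 10 * α ^ 3 + 295 * α ^ 2 + 5 * α + 18 = 0) :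
    Polynomial.aeval ((α - 2) ^ 3 / 5) hQaux = 0 := by
  haveI : CharZero K := charZero_of_injective_algebraMap (algebraMap ℚ_[5] K).injective
  have h5 : (5 : K) ≠ 0 := by norm_num
  unfold hQaux
  simp only [map_add, map_sub, map_mul, map_pow, aeval_X, map_ofNat]
  field_simp
  linear_combination (22920924 - 26944320*α + 15264595*α^2
    - 5932835*α^3 + 1949115*α^4 - 542264*α^5 + 110960*α^6
    - 14560*α^7 + 1105*α^8 - 45*α^9 + α^10) * hα

/-- The quintic has no irreducible factor of degree less than `5`. -/
theorem no_small_factor (c : ℚ_[5][X]) (hc : Irreducible c)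
    (hdvd : c ∣ (X ^ 5 + 15 * X ^ 4 - 10 * X ^ 3 + 295 * X ^ 2 + 5 * X + 18 : ℚ_[5][X])) :
    5 ≤ c.natDegree := by
  by_contra hlt
  push_neg at hlt
  haveI := Fact.mk hc
  set K := AdjoinRoot c
  set α : K := AdjoinRoot.root c
  obtain ⟨d, hd⟩ := hdvd
  have hαf : (Polynomial.aeval α)
      (X ^ 5 + 15 * X ^ 4 - 10 * X ^ 3 + 295 * X ^ 2 + 5 * X + 18 : ℚ_[5][X]) = 0 := by
    rw [hd, map_mul]
    have : (Polynomial.aeval α) c = 0 := by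
      rw [AdjoinRoot.aeval_eq, AdjoinRoot.mk_self]
    rw [this, zero_mul]
  have hα : α ^ 5 + 15 * α ^ 4 - 10 * α ^ 3 + 295 * α ^ 2 + 5 * α + 18 = 0 := by
    simpa [map_add, map_sub, map_mul, map_pow, aeval_X, map_ofNat] using hαf
  have hroot := key_root α hα
  have hmin : minpoly ℚ_[5] ((α - 2) ^ 3 / 5) = hQaux :=
    (minpoly.eq_of_irreducible_of_monic hQaux_irred hroot hQaux_monic).symm
  haveI : FiniteDimensional ℚ_[5] K := PowerBasis.finite (AdjoinRoot.powerBasis hc.ne_zero)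
  have hle : (minpoly ℚ_[5] ((α - 2) ^ 3 / 5)).natDegree ≤ Module.finrank ℚ_[5] K :=
    minpoly.natDegree_le _
  have hfr : Module.finrank ℚ_[5] K = c.natDegree := by
    rw [PowerBasis.finrank (AdjoinRoot.powerBasis hc.ne_zero)]
    simp [AdjoinRoot.powerBasis]
  rw [hmin, hQaux_natDegree, hfr] at hle
  omega

/-- The polynomial `x^5 + 15x^4 - 10x^3 + 295x^2 + 5x + 18` is irreducible over `ℚ_5`. -/
theorem irreducible_quintic_three_over_Q5 :
    Irreducible (X ^ 5 + 15 * X ^ 4 - 10 * X ^ 3 + 295 * X ^ 2 + 5 * X + 18 : ℚ_[5][X]) := by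
  set f : ℚ_[5][X] := X ^ 5 + 15 * X ^ 4 - 10 * X ^ 3 + 295 * X ^ 2 + 5 * X + 18 with hfdef
  have fmonic : f.Monic := by rw [hfdef]; monicity!
  have fdeg : f.natDegree = 5 := by rw [hfdef]; compute_degree!
  have f0 : f ≠ 0 := fmonic.ne_zero
  constructor
  · intro hu
    have := Polynomial.natDegree_eq_zero_of_isUnit hu
    omega
  · rintro a b hab
    by_contra hcon
    push_neg at hcon
    obtain ⟨ha, hb⟩ := hcon
    have ha0 : a ≠ 0 := fun h => f0 (by rw [hab, h, zero_mul])
    have hb0 : b ≠ 0 := fun h => f0 (by rw [hab, h, mul_zero])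
    have hdeg : a.natDegree + b.natDegree = 5 := by
      rw [← Polynomial.natDegree_mul ha0 hb0, ← hab, fdeg]
    have keyunit : ∀ q : ℚ_[5][X], q ≠ 0 → q.natDegree = 0 → IsUnit q := by
      intro q hq0 hq
      rw [Polynomial.eq_C_of_natDegree_eq_zero hq]
      exact isUnit_C.mpr (isUnit_iff_ne_zero.mpr (fun hc0 => hq0 (by
        rw [Polynomial.eq_C_of_natDegree_eq_zero hq, hc0, map_zero])))
    have hda : 0 < a.natDegree :=
      Nat.pos_of_ne_zero (fun h => ha (keyunit a ha0 h))
    have hdb : 0 < b.natDegree :=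
      Nat.pos_of_ne_zero (fun h => hb (keyunit b hb0 h))
    -- one of a, b has natDegree ≤ 2
    rcases le_or_gt a.natDegree 2 with hsmall | hbig
    · obtain ⟨c, hcirr, hcdvd⟩ := WfDvdMonoid.exists_irreducible_factor ha ha0
      have h1 : c ∣ f := hcdvd.trans ⟨b, hab⟩
      have h2 : c.natDegree ≤ a.natDegree := Polynomial.natDegree_le_of_dvd hcdvd ha0
      have := no_small_factor c hcirr h1
      omega
    · obtain ⟨c, hcirr, hcdvd⟩ := WfDvdMonoid.exists_irreducible_factor hb hb0
      have h1 : c ∣ f := hcdvd.trans ⟨a, by rw [hab]; ring⟩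
      have h2 : c.natDegree ≤ b.natDegree := Polynomial.natDegree_le_of_dvd hcdvd hb0
      have := no_small_factor c hcirr h1
      omega
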